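/- For every finitely supported f : ℕ → ℂ: (T_{1→m₁^f}^{−1}(Δ_{G₁^f}(T_{1→m₁^f} f)))(n) = (e^{1/2} + e^{−1/2})·f(n) − f(n−1) − f(n+1) for every n ≥ 1, and (T_{1→m₁^f}^{−1}(Δ_{G₁^f}(T_{1→m₁^f} f)))(0) = e^{1/2}·f(0) − f(1). Equivalently, on finitely supported functions, T_{1→m₁^f}^{−1} ∘ Δ_{G₁^f} ∘ T_{1→m₁^f} = Δ_ℕ + (1 − e^{−1/2})·𝟙₀ + (e^{1/2} + e^{−1/2} − 2)·Id. -/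
import Mathlib


noncomputable section

open Complex

/-- The Laplacian of the weighted graph `(E, V, m)`. -/
def lap {V : Type*} (E : V → V → ℝ) (m : V → ℝ) (f : V → ℂ) : V → ℂ :=
  fun x => (1 / (m x : ℂ)) * ∑' y : V, ((E x y : ℝ) : ℂ) * (f x - f y)

/-- Edge weights of the funnel half-line: `E₁^f(n, n+1) = e^{(2n+1)/2}`. -/
def e1F : ℕ → ℕ → ℝ := fun n k =>
  if k = n + 1 then Real.exp ((2 * (n : ℝ) + 1) / 2)
  else if n = k + 1 then Real.exp ((2 * (k : ℝ) + 1) / 2) else 0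

/-- Weight of the funnel half-line: `m₁^f(n) = eⁿ`. -/
def m1F : ℕ → ℝ := fun n => Real.exp n

/-- The gauge transform `T_{m→m'} f = (x ↦ √(m(x)/m'(x))·f(x))`. -/
def Tw {V : Type*} (m m' : V → ℝ) (f : V → ℂ) : V → ℂ :=
  fun x => (Real.sqrt (m x / m' x) : ℂ) * f x

/-- `(Δ_ℕ f)(n) = 2f(n) − f(n−1) − f(n+1)` for `n ≥ 1`, `(Δ_ℕ f)(0) = f(0) − f(1)`. -/
def deltaN (f : ℕ → ℂ) : ℕ → ℂ := fun n =>
  if n = 0 then f 0 - f 1 else 2 * f n - f (n - 1) - f (n + 1)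

/-- `(𝟙₀ f)(n) = f(0)` if `n = 0`, and `0` otherwise. -/
def One0 (f : ℕ → ℂ) : ℕ → ℂ := fun n => if n = 0 then f 0 else 0

lemma sqrtExp (x : ℝ) : Real.sqrt (Real.exp x) = Real.exp (x/2) := by
  rw [show Real.exp x = Real.exp (x/2) * Real.exp (x/2) by rw [← Real.exp_add]; ring_nf,
    Real.sqrt_mul_self (Real.exp_nonneg _)]

lemma e1F_succ (n : ℕ) : e1F n (n+1) = Real.exp ((2 * (n:ℝ) + 1) / 2) := by
  unfold e1F; rw [if_pos rfl]

lemma e1F_pred (m : ℕ) : e1F (m+1) m = Real.exp ((2 * (m:ℝ) + 1) / 2) := by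
  unfold e1F; rw [if_neg (by omega), if_pos rfl]

lemma lap0 (g : ℕ → ℂ) : lap e1F m1F g 0
    = (1 / (m1F 0 : ℂ)) * ((e1F 0 1 : ℂ) * (g 0 - g 1)) := by
  unfold lap
  congr 1
  rw [tsum_eq_sum (s := ({1} : Finset ℕ)) ?_, Finset.sum_singleton]
  intro b hb
  simp only [Finset.mem_singleton] at hb
  have : e1F 0 b = 0 := by
    unfold e1F; split_ifs with h1 h2 <;> first | rfl | omega | tauto
  simp [this]

lemma lapS (g : ℕ → ℂ) (m : ℕ) : lap e1F m1F g (m+1)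
    = (1 / (m1F (m+1) : ℂ)) * ((e1F (m+1) m : ℂ) * (g (m+1) - g m)
        + (e1F (m+1) (m+2) : ℂ) * (g (m+1) - g (m+2))) := by
  unfold lap
  congr 1
  rw [tsum_eq_sum (s := ({m, m+2} : Finset ℕ)) ?_, Finset.sum_pair (by omega)]
  intro b hb
  simp only [Finset.mem_insert, Finset.mem_singleton] at hb
  push_neg at hb
  have : e1F (m+1) b = 0 := by
    unfold e1F; split_ifs with h1 h2 <;> first | rfl | omega | tauto
  simp [this]

lemma mainS (f : ℕ → ℂ) (m : ℕ) :
      Tw m1F (fun _ => 1) (lap e1F m1F (Tw (fun _ => 1) m1F f)) (m+1)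
        = ((Real.exp (1 / 2) + Real.exp (-(1 / 2)) : ℝ) : ℂ) * f (m+1)
            - f m - f (m + 2) := by
  unfold Tw
  rw [lapS]
  rw [show ((m:ℕ)+1+1 : ℕ) = m+2 from rfl, e1F_pred]
  rw [show e1F (m+1) (m+2) = Real.exp ((2 * ((m:ℝ)+1) + 1) / 2) by
    have := e1F_succ (m+1); push_cast at this ⊢; rw [this]]
  simp only [m1F, div_one, one_div, Real.sqrt_inv, sqrtExp]
  push_cast [Complex.ofReal_exp, Complex.ofReal_inv]
  simp only [← Complex.exp_neg, mul_sub, mul_add, ← mul_assoc, ← Complex.exp_add]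
  ring_nf
  simp [Complex.exp_zero]

lemma main0 (f : ℕ → ℂ) :
      Tw m1F (fun _ => 1) (lap e1F m1F (Tw (fun _ => 1) m1F f)) 0
        = ((Real.exp (1 / 2) : ℝ) : ℂ) * f 0 - f 1 := by
  unfold Tw
  rw [lap0]
  rw [show e1F 0 1 = Real.exp ((2 * ((0:ℕ):ℝ) + 1) / 2) from e1F_succ 0]
  simp only [m1F, div_one, one_div, Real.sqrt_inv, sqrtExp]
  push_cast [Complex.ofReal_exp, Complex.ofReal_inv]
  simp only [← Complex.exp_neg, mul_sub, mul_add, ← mul_assoc, ← Complex.exp_add]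
  ring_nf
  simp [Complex.exp_zero]

/-- **Gauge transform of the funnel half-line Laplacian:**
`T_{1→m₁^f}⁻¹ ∘ Δ_{G₁^f} ∘ T_{1→m₁^f} = Δ_ℕ + (1 − e^{−1/2})·𝟙₀ + (e^{1/2} + e^{−1/2} − 2)·Id`. -/
theorem stmt5 (f : ℕ → ℂ) (hf : (Function.support f).Finite) :
    (∀ n : ℕ, 1 ≤ n →
      Tw m1F (fun _ => 1) (lap e1F m1F (Tw (fun _ => 1) m1F f)) n
        = ((Real.exp (1 / 2) + Real.exp (-(1 / 2)) : ℝ) : ℂ) * f n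
            - f (n - 1) - f (n + 1)) ∧
    (Tw m1F (fun _ => 1) (lap e1F m1F (Tw (fun _ => 1) m1F f)) 0
        = ((Real.exp (1 / 2) : ℝ) : ℂ) * f 0 - f 1) ∧
    (∀ n : ℕ,
      Tw m1F (fun _ => 1) (lap e1F m1F (Tw (fun _ => 1) m1F f)) n
        = deltaN f n + ((1 - Real.exp (-(1 / 2)) : ℝ) : ℂ) * One0 f n
            + ((Real.exp (1 / 2) + Real.exp (-(1 / 2)) - 2 : ℝ) : ℂ) * f n) := by
  refine ⟨?_, main0 f, ?_⟩
  · intro n hn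
    obtain ⟨m, rfl⟩ : ∃ m, n = m + 1 := ⟨n - 1, by omega⟩
    simpa using mainS f m
  · intro n
    cases n with
    | zero =>
        rw [main0]
        simp only [deltaN, One0, if_pos rfl]
        push_cast
        ring
    | succ m =>
        rw [mainS]
        simp only [deltaN, One0, if_neg (Nat.succ_ne_zero m)]
        push_cast
        ring_nf
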